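/- If a randomized algorithm A is ε-uniformly stable, then its expected generalization error is bounded by ε: |E_{S,A}[R_S(A(S)) − R(A(S))]| ≤ ε. Precisely: let Z be a measurable space with probability measure μ, let f : ℝ^d × Z → ℝ be a bounded measurable loss, let (Ω, P) be a probability space of algorithmic randomness, and let A : Z^N × Ω → ℝ^d be measurable. Assume that for every i ∈ {1, …, N}, every pair of datasets S, S'' ∈ Z^N that differ only in the i-th entry, and every z ∈ Z, E_ω[f(A(S, ω), z) − f(A(S'', ω), z)] ≤ ε. Then, with S = (z_1, …, z_N) drawn from the product measure μ^N, |E_{S ~ μ^N, ω}[(1/N)·∑_{i=1}^N f(A(S, ω), z_i) − ∫_Z f(A(S, ω), z) dμ(z)]| ≤ ε. -/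

import Mathlib

open MeasureTheory

open Function


lemma my_integrable_of_bdd {α : Type*} [MeasurableSpace α] {ν : Measure α} [IsFiniteMeasure ν]
    {g : α → ℝ} {B : ℝ} (hm : AEStronglyMeasurable g ν) (hb : ∀ a, |g a| ≤ B) :
    Integrable g ν :=
  ⟨hm, HasFiniteIntegral.of_bounded (C := B) (ae_of_all _ (by simpa [Real.norm_eq_abs] using hb))⟩

lemma my_abs_integral_le {α : Type*} [MeasurableSpace α] (ν : Measure α) [IsProbabilityMeasure ν]
    {g : α → ℝ} {B : ℝ} (h : ∀ a, |g a| ≤ B) : |∫ a, g a ∂ν| ≤ B := by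
  have := norm_integral_le_of_norm_le_const (μ := ν) (f := g) (C := B)
    (ae_of_all _ (by simpa [Real.norm_eq_abs] using h))
  simpa [Real.norm_eq_abs] using this

lemma swap_update_mp {N : ℕ} {Z : Type*} [MeasurableSpace Z] (μ : Measure Z)
    [IsProbabilityMeasure μ] (i : Fin N) :
    ∃ TE : ((Fin N → Z) × Z) ≃ᵐ ((Fin N → Z) × Z),
      (∀ p : (Fin N → Z) × Z, TE p = (Function.update p.1 i p.2, p.1 i)) ∧
      MeasurePreserving TE ((Measure.pi fun _ : Fin N => μ).prod μ)
        ((Measure.pi fun _ : Fin N => μ).prod μ) := by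
  set π := Measure.pi fun _ : Fin N => μ with hπ
  let e : (Fin (N+1) → Z) ≃ᵐ Z × (Fin N → Z) :=
    MeasurableEquiv.piFinSuccAbove (fun _ => Z) (Fin.last N)
  let p : (Fin (N+1) → Z) ≃ᵐ (Fin (N+1) → Z) :=
    MeasurableEquiv.piCongrLeft (fun _ : Fin (N+1) => Z) (Equiv.swap i.castSucc (Fin.last N))
  let c : ((Fin N → Z) × Z) ≃ᵐ (Z × (Fin N → Z)) := MeasurableEquiv.prodComm
  refine ⟨c.trans (e.symm.trans (p.trans (e.trans c.symm))), ?_, ?_⟩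
  · rintro ⟨S, z⟩
    have hp : ∀ (g : Fin (N+1) → Z) (k : Fin (N+1)),
        p g k = g (Equiv.swap i.castSucc (Fin.last N) k) := by
      intro g k
      have := MeasurableEquiv.piCongrLeft_apply_apply (β := fun _ : Fin (N+1) => Z)
        (Equiv.swap i.castSucc (Fin.last N)) g (Equiv.swap i.castSucc (Fin.last N) k)
      simpa using this
    have he : ∀ g : Fin (N+1) → Z, e g = (g (Fin.last N), fun j => g ((Fin.last N).succAbove j)) := by
      intro g; rfl
    have hesymm : e.symm (z, S) = Fin.snoc S z := by
      show (Fin.insertNthEquiv (fun _ => Z) (Fin.last N)) (z, S) = Fin.snoc S z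
      simp [Fin.insertNthEquiv, Fin.insertNth_last']
    simp only [MeasurableEquiv.trans_apply]
    have hc : c (S, z) = (z, S) := rfl
    rw [hc, hesymm, he]
    have h1 : p (Fin.snoc S z) (Fin.last N) = S i := by
      rw [hp, Equiv.swap_apply_right]
      simp [Fin.snoc_castSucc]
    have h2 : (fun j => p (Fin.snoc S z) ((Fin.last N).succAbove j)) = Function.update S i z := by
      funext j
      rw [hp]
      have hsa : (Fin.last N).succAbove j = j.castSucc := congrFun Fin.succAbove_last j
      rw [hsa]
      by_cases hj : j = i
      · subst hj
        rw [Equiv.swap_apply_left]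
        simp [Fin.snoc_last, Function.update_self]
      · rw [Equiv.swap_apply_of_ne_of_ne (by simpa using hj) (Fin.castSucc_lt_last j).ne]
        simp [Fin.snoc_castSucc, Function.update_of_ne hj]
    rw [h1, h2]
    rfl
  · have mp_c : MeasurePreserving c (π.prod μ) (μ.prod π) := Measure.measurePreserving_swap
    have mp_c2 : MeasurePreserving c.symm (μ.prod π) (π.prod μ) := Measure.measurePreserving_swap
    have mp_e : MeasurePreserving e (Measure.pi fun _ : Fin (N+1) => μ) (μ.prod π) :=
      measurePreserving_piFinSuccAbove (fun _ : Fin (N+1) => μ) (Fin.last N)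
    have mp_p : MeasurePreserving p (Measure.pi fun _ : Fin (N+1) => μ)
        (Measure.pi fun _ : Fin (N+1) => μ) :=
      measurePreserving_piCongrLeft (fun _ : Fin (N+1) => μ) (Equiv.swap i.castSucc (Fin.last N))
    exact mp_c2.comp (mp_e.comp (mp_p.comp ((MeasurePreserving.symm e mp_e).comp mp_c)))

/-- uniform stability bounds the expected generalization error. If the
randomized algorithm `A` is ε-uniformly stable (for datasets differing in one entry), then
`|E_{S ~ μ^N, ω}[R_S(A(S,ω)) - R(A(S,ω))]| ≤ ε`, where `R_S` is the empirical risk and `R`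
the population risk of the bounded measurable loss `f`. -/
theorem uniform_stability_generalization
    {d N : ℕ} (hN : 1 ≤ N)
    {Z : Type*} [MeasurableSpace Z] (μ : Measure Z) [IsProbabilityMeasure μ]
    (f : EuclideanSpace ℝ (Fin d) → Z → ℝ)
    (hf_meas : Measurable (Function.uncurry f))
    (C : ℝ) (hf_bdd : ∀ x zz, |f x zz| ≤ C)
    {Ω : Type*} [MeasurableSpace Ω] (P : Measure Ω) [IsProbabilityMeasure P]
    (A : (Fin N → Z) → Ω → EuclideanSpace ℝ (Fin d))
    (hA_meas : Measurable (Function.uncurry A))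
    (ε : ℝ)
    (hstable : ∀ (i : Fin N) (S S'' : Fin N → Z), (∀ j, j ≠ i → S j = S'' j) →
      ∀ zz : Z, ∫ ω, (f (A S ω) zz - f (A S'' ω) zz) ∂P ≤ ε) :
    |∫ S, ∫ ω, ((N : ℝ)⁻¹ * ∑ i : Fin N, f (A S ω) (S i) - ∫ zz, f (A S ω) zz ∂μ) ∂P
        ∂(Measure.pi fun _ : Fin N => μ)| ≤ ε := by
  set π := (Measure.pi fun _ : Fin N => μ) with hπdef
  set φ : (Fin N → Z) → Z → ℝ := fun S z => ∫ ω, f (A S ω) z ∂P with hφdef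
  set ψ : EuclideanSpace ℝ (Fin d) → ℝ := fun x => ∫ z, f x z ∂μ with hψdef
  have hNne : (N : ℝ) ≠ 0 := Nat.cast_ne_zero.2 (by omega)
  -- measurability facts
  have hF : Measurable fun q : ((Fin N → Z) × Z) × Ω => f (A q.1.1 q.2) q.1.2 :=
    hf_meas.comp ((hA_meas.comp (measurable_fst.fst.prodMk measurable_snd)).prodMk
      measurable_fst.snd)
  have hφm : StronglyMeasurable fun p : (Fin N → Z) × Z => φ p.1 p.2 :=
    hF.stronglyMeasurable.integral_prod_right'
  have hψm : StronglyMeasurable ψ := hf_meas.stronglyMeasurable.integral_prod_right'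
  have hAω : ∀ S : Fin N → Z, Measurable fun ω => A S ω := fun S =>
    hA_meas.comp (measurable_const.prodMk measurable_id)
  have hφb : ∀ S z, |φ S z| ≤ C := fun S z => my_abs_integral_le P (fun ω => hf_bdd _ _)
  have hψb : ∀ x, |ψ x| ≤ C := fun x => my_abs_integral_le μ (fun z => hf_bdd _ _)
  have hfiω : ∀ (S : Fin N → Z) (z : Z), Integrable (fun ω => f (A S ω) z) P := fun S z =>
    my_integrable_of_bdd ((hf_meas.comp ((hAω S).prodMk measurable_const)).aestronglyMeasurable)
      (fun ω => hf_bdd _ _)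
  -- Step A1 : inner integral computation
  have hA1 : ∀ S : Fin N → Z,
      (∫ ω, ((N : ℝ)⁻¹ * ∑ i : Fin N, f (A S ω) (S i) - ∫ zz, f (A S ω) zz ∂μ) ∂P)
        = (N : ℝ)⁻¹ * ∑ i : Fin N, φ S (S i) - ∫ z, φ S z ∂μ := by
    intro S
    have hsum : Integrable (fun ω => (N : ℝ)⁻¹ * ∑ i : Fin N, f (A S ω) (S i)) P :=
      (integrable_finset_sum _ (fun i _ => hfiω S (S i))).const_mul _
    have hψA : Integrable (fun ω => ψ (A S ω)) P :=
      my_integrable_of_bdd ((hψm.measurable.comp (hAω S)).aestronglyMeasurable) (fun ω => hψb _)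
    rw [show (fun ω => ((N : ℝ)⁻¹ * ∑ i : Fin N, f (A S ω) (S i) - ∫ zz, f (A S ω) zz ∂μ))
        = (fun ω => ((N : ℝ)⁻¹ * ∑ i : Fin N, f (A S ω) (S i) - ψ (A S ω))) from rfl]
    rw [integral_sub hsum hψA, integral_const_mul, integral_finset_sum _ (fun i _ => hfiω S (S i))]
    congr 1
    -- Fubini for fixed S
    have hint : Integrable (uncurry fun ω z => f (A S ω) z) (P.prod μ) :=
      my_integrable_of_bdd
        ((hf_meas.comp (((hAω S).comp measurable_fst).prodMk measurable_snd)).aestronglyMeasurable)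
        (fun q => hf_bdd _ _)
    exact integral_integral_swap hint
  -- quantities
  set a : Fin N → ℝ := fun i => ∫ S, φ S (S i) ∂π with hadef
  set B : ℝ := ∫ p : (Fin N → Z) × Z, φ p.1 p.2 ∂(π.prod μ) with hBdef
  have hφi : ∀ i : Fin N, Integrable (fun S => φ S (S i)) π := fun i =>
    my_integrable_of_bdd
      ((hφm.measurable.comp (measurable_id.prodMk (measurable_pi_apply i))).aestronglyMeasurable)
      (fun S => hφb _ _)
  have hintprod : Integrable (fun p : (Fin N → Z) × Z => φ p.1 p.2) (π.prod μ) :=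
    my_integrable_of_bdd hφm.aestronglyMeasurable (fun p => hφb _ _)
  have hBalt : B = ∫ S, ∫ z, φ S z ∂μ ∂π := integral_prod _ hintprod
  -- Step A : total = N⁻¹ ∑ a i - B
  have hA2 : (∫ S, ∫ ω, ((N : ℝ)⁻¹ * ∑ i : Fin N, f (A S ω) (S i) - ∫ zz, f (A S ω) zz ∂μ) ∂P ∂π)
      = (N : ℝ)⁻¹ * ∑ i : Fin N, a i - B := by
    rw [show (fun S => ∫ ω, ((N : ℝ)⁻¹ * ∑ i : Fin N, f (A S ω) (S i) - ∫ zz, f (A S ω) zz ∂μ) ∂P)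
        = (fun S => (N : ℝ)⁻¹ * ∑ i : Fin N, φ S (S i) - ∫ z, φ S z ∂μ) from funext hA1]
    have h1 : Integrable (fun S => (N : ℝ)⁻¹ * ∑ i : Fin N, φ S (S i)) π :=
      (integrable_finset_sum _ (fun i _ => hφi i)).const_mul _
    have h2 : Integrable (fun S => ∫ z, φ S z ∂μ) π :=
      my_integrable_of_bdd hφm.integral_prod_right'.aestronglyMeasurable
        (fun S => my_abs_integral_le μ (fun z => hφb _ _))
    rw [integral_sub h1 h2, integral_const_mul, integral_finset_sum _ (fun i _ => hφi i), hBalt]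
  rw [hA2]
  -- Step B : |a i - B| ≤ ε for each i
  have hstep : ∀ i : Fin N, |a i - B| ≤ ε := by
    intro i
    obtain ⟨TE, hTE, hMP⟩ := swap_update_mp μ i
    have hupd : Measurable fun p : (Fin N → Z) × Z => (Function.update p.1 i p.2, p.2) := by
      refine Measurable.prodMk ?_ measurable_snd
      refine measurable_pi_iff.2 fun j => ?_
      by_cases hj : j = i
      · subst hj; simpa [Function.update_self] using
          (measurable_snd : Measurable fun p : (Fin N → Z) × Z => p.2)
      · simpa [Function.update_of_ne hj, Function.comp_def] using
          ((measurable_pi_apply j).comp (measurable_fst : Measurable fun p : (Fin N → Z) × Z => p.1))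
    have hG1m : Measurable fun p : (Fin N → Z) × Z => φ p.1 (p.1 i) :=
      hφm.measurable.comp (measurable_fst.prodMk ((measurable_pi_apply i).comp measurable_fst))
    have hmap : (π.prod μ).map Prod.fst = π := by
      rw [Measure.map_fst_prod]; simp
    have ha1 : a i = ∫ p : (Fin N → Z) × Z, φ p.1 (p.1 i) ∂(π.prod μ) := by
      have h : ∫ S, φ S (S i) ∂(Measure.map Prod.fst (π.prod μ))
          = ∫ p : (Fin N → Z) × Z, φ p.1 (p.1 i) ∂(π.prod μ) :=
        integral_map measurable_fst.aemeasurable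
          (Measurable.aestronglyMeasurable
            (hφm.measurable.comp (measurable_id.prodMk (measurable_pi_apply i))))
      rw [hmap] at h
      exact h
    have ha2 : a i = ∫ p : (Fin N → Z) × Z, φ (Function.update p.1 i p.2) p.2 ∂(π.prod μ) := by
      rw [ha1, ← hMP.integral_comp TE.measurableEmbedding (fun p => φ p.1 (p.1 i))]
      congr 1
      funext p
      rw [hTE p]
      simp [Function.update_self]
    have hi1 : Integrable (fun p : (Fin N → Z) × Z => φ (Function.update p.1 i p.2) p.2)
        (π.prod μ) :=
      my_integrable_of_bdd ((hφm.measurable.comp hupd).aestronglyMeasurable) (fun p => hφb _ _)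
    have hdiff : a i - B = ∫ p : (Fin N → Z) × Z,
        (φ (Function.update p.1 i p.2) p.2 - φ p.1 p.2) ∂(π.prod μ) := by
      rw [ha2, hBdef, ← integral_sub hi1 hintprod]
    have hpt : ∀ p : (Fin N → Z) × Z,
        |φ (Function.update p.1 i p.2) p.2 - φ p.1 p.2| ≤ ε := by
      rintro ⟨S, z⟩
      have heq : φ (Function.update S i z) z - φ S z
          = ∫ ω, (f (A (Function.update S i z) ω) z - f (A S ω) z) ∂P :=
        (integral_sub (hfiω _ z) (hfiω S z)).symm
      have hup : φ (Function.update S i z) z - φ S z ≤ ε := by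
        rw [heq]
        exact hstable i (Function.update S i z) S
          (fun j hj => Function.update_of_ne hj _ _) z
      have hlow : φ S z - φ (Function.update S i z) z ≤ ε := by
        have heq2 : φ S z - φ (Function.update S i z) z
            = ∫ ω, (f (A S ω) z - f (A (Function.update S i z) ω) z) ∂P :=
          (integral_sub (hfiω S z) (hfiω _ z)).symm
        rw [heq2]
        exact hstable i S (Function.update S i z)
          (fun j hj => (Function.update_of_ne hj _ _).symm) z
      exact abs_le.2 ⟨by linarith, hup⟩
    rw [hdiff]
    exact my_abs_integral_le (π.prod μ) hpt
  -- Step C : combine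
  have hεnn : 0 ≤ ε := le_trans (abs_nonneg _) (hstep ⟨0, hN⟩)
  have hsplit : (N : ℝ)⁻¹ * ∑ i : Fin N, a i - B
      = (N : ℝ)⁻¹ * ∑ i : Fin N, (a i - B) := by
    rw [Finset.sum_sub_distrib, mul_sub, Finset.sum_const, Finset.card_univ, Fintype.card_fin,
      nsmul_eq_mul]
    field_simp
  rw [hsplit, abs_mul, abs_of_nonneg (by positivity : (0:ℝ) ≤ (N : ℝ)⁻¹)]
  calc (N : ℝ)⁻¹ * |∑ i : Fin N, (a i - B)|
      ≤ (N : ℝ)⁻¹ * ∑ i : Fin N, |a i - B| := by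
        gcongr; exact Finset.abs_sum_le_sum_abs _ _
    _ ≤ (N : ℝ)⁻¹ * ∑ _i : Fin N, ε := by
        gcongr with i _; exact hstep i
    _ = ε := by
        rw [Finset.sum_const, Finset.card_univ, Fintype.card_fin, nsmul_eq_mul]
        field_simp
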